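/- If each player appears in O(log n) quorums, each quorum has O(log n) players, each gate of an m-gate circuit is assigned to a quorum in round-robin fashion (gate i to quorum i mod n), and evaluating one gate costs each participating quorum member polylog(n) messages, then each player sends at most Õ(m/n + √n) messages in total during circuit evaluation. -/
import Mathlib


/-- If each player is in at most `c₁ log n` quorums, each quorum handles
at most `⌈m/n⌉` gates (round-robin assignment of the `m` gates to `n` quorums), each
gate costs a participating quorum member at most `(log n)^c₃` messages, and quorum
formation costs each player at most `√n (log n)^c₃` messages, then each player's total
message cost during circuit evaluation is `Õ(m/n + √n)`. -/
theorem stmt12 (c₁ : ℝ) (c₃ : ℕ) (hc₁ : 0 < c₁) :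
    ∃ C : ℝ, ∃ k : ℕ, 0 < C ∧ ∀ n m : ℕ, 2 ≤ n →
      c₁ * Real.logb 2 n * (⌈(m : ℝ) / n⌉ : ℝ) * (Real.logb 2 n) ^ c₃
          + Real.sqrt n * (Real.logb 2 n) ^ c₃
        ≤ C * ((m : ℝ) / n + Real.sqrt n) * (Real.logb 2 n) ^ k := by
  refine ⟨c₁ + 1, c₃ + 1, by linarith, fun n m hn => ?_⟩
  have hn2 : (2 : ℝ) ≤ (n : ℝ) := by exact_mod_cast hn
  set L : ℝ := Real.logb 2 n with hLdef
  have hL : 1 ≤ L := by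
    rw [hLdef, show (1:ℝ) = Real.logb 2 2 by simp]
    exact Real.logb_le_logb_of_le (by norm_num) (by norm_num) hn2
  have hP : (1 : ℝ) ≤ L ^ c₃ := one_le_pow₀ hL
  have hs : (1 : ℝ) ≤ Real.sqrt n := by
    rw [show (1:ℝ) = Real.sqrt 1 by simp]
    exact Real.sqrt_le_sqrt (by linarith)
  have hx : (0 : ℝ) ≤ (m : ℝ) / n := by positivity
  have hq : (⌈(m : ℝ) / n⌉ : ℝ) ≤ (m : ℝ) / n + 1 := le_of_lt (Int.ceil_lt_add_one _)
  have hpow : L ^ (c₃ + 1) = L * L ^ c₃ := by ring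
  rw [hpow]
  set s := Real.sqrt n
  set x := (m : ℝ) / n
  set P := L ^ c₃
  have hP0 : (0 : ℝ) ≤ P := by linarith
  have h1 : c₁ * L * (⌈x⌉ : ℝ) * P ≤ c₁ * L * (x + s) * P := by
    have : (⌈x⌉ : ℝ) ≤ x + s := by linarith
    have hcl : 0 ≤ c₁ * L := by nlinarith
    nlinarith [mul_le_mul_of_nonneg_left this hcl]
  have h2 : s * P ≤ (x + s) * (L * P) := by
    have h3 : s * P ≤ s * (L * P) := by
      nlinarith [mul_nonneg (mul_nonneg (by linarith : (0:ℝ) ≤ s) (by linarith : (0:ℝ) ≤ L - 1)) hP0]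
    have h4 : 0 ≤ x * (L * P) := mul_nonneg hx (mul_nonneg (by linarith) hP0)
    nlinarith [h3, h4]
  nlinarith [h1, h2, mul_nonneg (mul_nonneg (le_of_lt hc₁) (by linarith : (0:ℝ) ≤ L)) hP0]
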